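/- For a permutation σ in one-line notation obtained by Foata's canonicalization, the number of cycles of the original permutation equals the number of left-to-right minima of the word σ(1), ..., σ(n). -/

import Mathlib

open Classical in
/-- The minima of the cycles of `σ` (including fixed points), listed in decreasing order. -/
noncomputable def cycleMinsDesc {n : ℕ} (σ : Equiv.Perm (Fin n)) : List (Fin n) :=
  ((List.finRange n).filter fun x => decide (∀ y, σ.SameCycle x y → x ≤ y)).reverse

/-- The cycle of `σ` containing `m`, written starting at `m` (a fixed point yields `[m]`). -/
def cycleBlock {n : ℕ} (σ : Equiv.Perm (Fin n)) (m : Fin n) : List (Fin n) :=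
  (List.range (max (σ.cycleOf m).support.card 1)).map fun i => (σ ^ i) m

/-- Foata's word: canonical cycle notation with parentheses erased. -/
noncomputable def foataWord {n : ℕ} (σ : Equiv.Perm (Fin n)) : List (Fin n) :=
  (cycleMinsDesc σ).flatMap (cycleBlock σ)

section aux

lemma key {n : ℕ} (P : Fin n → Prop) (B : Fin n → List (Fin n)) :
    ∀ (Ms : List (Fin n)), Ms.Pairwise (fun a b => b < a) →
    (∀ m ∈ Ms, P m) →
    (∀ m ∈ Ms, ∃ t, B m = m :: t ∧ ∀ v ∈ t, m < v) →
    (∀ m ∈ Ms, ∀ v ∈ B m, P v → v = m) →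
    ∀ i (hi : i < (Ms.flatMap B).length),
      ((∀ j (hj : j < i), (Ms.flatMap B)[i] < (Ms.flatMap B)[j]) ↔
        P (Ms.flatMap B)[i]) := by
  intro Ms
  induction Ms with
  | nil => intro _ _ _ _ i hi; simp at hi
  | cons m Ms ih =>
    intro hpair hP hblock hmin i hi
    have hpair' : Ms.Pairwise (fun a b => b < a) := hpair.of_cons
    have hlt : ∀ m' ∈ Ms, m' < m := fun m' hm' => List.rel_of_pairwise_cons hpair hm'
    obtain ⟨t, hBm, ht⟩ := hblock m List.mem_cons_self
    have hge : ∀ v ∈ B m, m ≤ v := by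
      intro v hv; rw [hBm] at hv
      rcases List.mem_cons.1 hv with rfl | hv
      · exact le_refl _
      · exact le_of_lt (ht v hv)
    have ihMs := ih hpair' (fun m' hm' => hP m' (List.mem_cons_of_mem _ hm'))
      (fun m' hm' => hblock m' (List.mem_cons_of_mem _ hm'))
      (fun m' hm' => hmin m' (List.mem_cons_of_mem _ hm'))
    simp only [List.flatMap_cons] at hi ⊢
    by_cases hc : i < (B m).length
    · -- inside first block
      have hWi : (B m ++ Ms.flatMap B)[i] = (B m)[i] := List.getElem_append_left hc
      rcases Nat.eq_zero_or_pos i with rfl | hipos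
      · have h0 : (B m)[0] = m := by simp [hBm]
        rw [hWi, h0]
        exact iff_of_true (by omega) (hP m List.mem_cons_self)
      · -- i > 0 : value is in tail t, so > m ; both sides false
        obtain ⟨k, rfl⟩ : ∃ k, i = k + 1 := ⟨i - 1, by omega⟩
        have hmem : (B m)[k+1] ∈ t := by
          have hct : k + 1 < (m :: t).length := by rw [hBm] at hc; exact hc
          have : (B m)[k+1] = (m :: t)[k+1]'hct := by
            apply List.getElem_of_eq hBm
          rw [this, List.getElem_cons_succ]
          exact List.getElem_mem _
        have hgt : m < (B m)[k+1] := ht _ hmem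
        constructor
        · intro hltr
          exfalso
          have h0 : (B m ++ Ms.flatMap B)[0]'(by simp [hBm]) = m := by
            rw [List.getElem_append_left (by omega : 0 < (B m).length)]
            simp [hBm]
          have := hltr 0 (by omega)
          rw [h0, hWi] at this
          exact absurd this (not_lt.2 (le_of_lt hgt))
        · intro hPv
          rw [hWi] at hPv
          have heq := hmin m List.mem_cons_self _ (List.getElem_mem hc) hPv
          rw [hWi]
          exact absurd heq (ne_of_gt hgt)
    · -- in the rest
      push_neg at hc
      have hlen : (B m ++ Ms.flatMap B).length = (B m).length + (Ms.flatMap B).length :=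
        List.length_append
      have hi' : i - (B m).length < (Ms.flatMap B).length := by
        rw [hlen] at hi; omega
      have hWi : (B m ++ Ms.flatMap B)[i] = (Ms.flatMap B)[i - (B m).length] :=
        List.getElem_append_right hc
      rw [hWi, ← ihMs _ hi']
      constructor
      · intro hltr j' hj'
        have hjlt : j' + (B m).length < i := by omega
        have e : (B m ++ Ms.flatMap B)[j' + (B m).length]'(by rw [hlen]; omega)
            = (Ms.flatMap B)[j'] := by
          rw [List.getElem_append_right (by omega)]
          simp
        have := hltr (j' + (B m).length) hjlt
        rwa [e] at this
      · intro hltr j hj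
        by_cases hjc : j < (B m).length
        · rw [List.getElem_append_left hjc]
          have hmemi : (Ms.flatMap B)[i - (B m).length] ∈ Ms.flatMap B :=
            List.getElem_mem _
          obtain ⟨m'', hm'', hvm⟩ := List.mem_flatMap.1 hmemi
          have hPi : P (Ms.flatMap B)[i - (B m).length] := (ihMs _ hi').1 hltr
          have heq := hmin m'' (List.mem_cons_of_mem _ hm'') _ hvm hPi
          calc (Ms.flatMap B)[i - (B m).length] = m'' := heq
            _ < m := hlt m'' hm''
            _ ≤ (B m)[j] := hge _ (List.getElem_mem _)
        · push_neg at hjc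
          rw [List.getElem_append_right hjc]
          exact hltr (j - (B m).length) (by omega)

variable {n : ℕ} (σ : Equiv.Perm (Fin n))


lemma sameCycle_pow (m : Fin n) (r : ℕ) : σ.SameCycle m ((σ ^ r) m) :=
  ⟨(r : ℤ), by rw [zpow_natCast]⟩

lemma mem_cycleMinsDesc {m : Fin n} (hm : m ∈ cycleMinsDesc σ) :
    ∀ y, σ.SameCycle m y → m ≤ y := by
  rw [cycleMinsDesc, List.mem_reverse, List.mem_filter] at hm
  exact of_decide_eq_true hm.2

lemma cycleMinsDesc_pairwise : (cycleMinsDesc σ).Pairwise (fun a b => b < a) := by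
  rw [cycleMinsDesc, List.pairwise_reverse]
  exact ((List.pairwise_lt_finRange n).sublist List.filter_sublist)

lemma cycleBlock_min {m : Fin n} (hm : m ∈ cycleMinsDesc σ) :
    ∀ v ∈ cycleBlock σ m, (∀ y, σ.SameCycle v y → v ≤ y) → v = m := by
  intro v hv hPv
  rw [cycleBlock, List.mem_map] at hv
  obtain ⟨r, -, rfl⟩ := hv
  exact le_antisymm (hPv m (sameCycle_pow σ m r).symm)
    (mem_cycleMinsDesc σ hm _ (sameCycle_pow σ m r))

lemma cycleBlock_eq {m : Fin n} (hm : m ∈ cycleMinsDesc σ) :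
    ∃ t, cycleBlock σ m = m :: t ∧ ∀ v ∈ t, m < v := by
  by_cases hfix : σ m = m
  · refine ⟨[], ?_, by simp⟩
    have hc : (σ.cycleOf m).support.card = 0 := by
      rw [(Equiv.Perm.cycleOf_eq_one_iff σ).2 hfix]; simp
    rw [cycleBlock, hc]
    simp [List.range_succ]
  · have hmem : m ∈ (σ.cycleOf m).support :=
      Equiv.Perm.mem_support_cycleOf_iff.2
        ⟨Equiv.Perm.SameCycle.refl _ _, Equiv.Perm.mem_support.2 hfix⟩
    set c := (σ.cycleOf m).support.card with hcdef
    have hc1 : 1 ≤ c := Finset.card_pos.2 ⟨m, hmem⟩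
    refine ⟨(List.range (c - 1)).map (fun r => (σ ^ (r + 1)) m), ?_, ?_⟩
    · rw [cycleBlock, show max c 1 = (c - 1) + 1 by omega, List.range_succ_eq_map,
        List.map_cons, List.map_map]
      simp [Function.comp_def, Nat.succ_eq_add_one]
    · intro v hv
      rw [List.mem_map] at hv
      obtain ⟨r, hr, rfl⟩ := hv
      rw [List.mem_range] at hr
      have hle : m ≤ (σ ^ (r + 1)) m := mem_cycleMinsDesc σ hm _ (sameCycle_pow σ m (r + 1))
      have hne : (σ ^ (r + 1)) m ≠ m := by
        rw [Ne, (σ.isCycleOn_support_cycleOf m).pow_apply_eq hmem]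
        intro hd
        have := Nat.le_of_dvd (by omega) hd
        omega
      exact lt_of_le_of_ne hle (Ne.symm hne)

end aux

open Classical Finset in
theorem stmt17 (n : ℕ) (σ τ : Equiv.Perm (Fin n))
    (h : foataWord σ = (List.finRange n).map τ) :
    (Finset.univ.filter (fun x : Fin n => ∀ y, σ.SameCycle x y → x ≤ y)).card
      = (Finset.univ.filter (fun i : Fin n => ∀ j < i, τ i < τ j)).card := by
  classical
  have hkey := key (fun x : Fin n => ∀ y, σ.SameCycle x y → x ≤ y) (cycleBlock σ)
    (cycleMinsDesc σ) (cycleMinsDesc_pairwise σ)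
    (fun m hm => mem_cycleMinsDesc σ hm)
    (fun m hm => cycleBlock_eq σ hm)
    (fun m hm => cycleBlock_min σ hm)
  have hkey' : ∀ (i : ℕ) (hi : i < (foataWord σ).length),
      (∀ j (hj : j < i), (foataWord σ)[i] < (foataWord σ)[j]) ↔
        ∀ y, σ.SameCycle ((foataWord σ)[i]) y → (foataWord σ)[i] ≤ y := hkey
  have hlen : (foataWord σ).length = n := by rw [h]; simp
  have hWget : ∀ (i : Fin n), (foataWord σ)[(i : ℕ)]'(by rw [hlen]; exact i.2) = τ i := by
    intro i
    rw [List.getElem_of_eq h (by rw [hlen]; exact i.2)]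
    simp
  have hiff : ∀ i : Fin n, (∀ j < i, τ i < τ j) ↔ (∀ y, σ.SameCycle (τ i) y → τ i ≤ y) := by
    intro i
    have hi' : (i : ℕ) < (foataWord σ).length := by rw [hlen]; exact i.2
    have hk := hkey' i.1 hi'
    rw [hWget i] at hk
    rw [← hk]
    constructor
    · intro hfin j hj
      have hjn : j < n := lt_trans hj i.2
      have := hfin ⟨j, hjn⟩ hj
      rwa [← hWget ⟨j, hjn⟩] at this
    · intro hnat j hj
      have := hnat j.1 hj
      rwa [hWget j] at this
  have hset : (Finset.univ.filter (fun i : Fin n => ∀ j < i, τ i < τ j))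
      = Finset.univ.filter (fun i : Fin n => ∀ y, σ.SameCycle (τ i) y → τ i ≤ y) := by
    apply Finset.filter_congr
    intro i _
    exact hiff i
  rw [hset]
  have himg : Finset.image τ
      (Finset.univ.filter (fun i : Fin n => ∀ y, σ.SameCycle (τ i) y → τ i ≤ y))
      = Finset.univ.filter (fun x : Fin n => ∀ y, σ.SameCycle x y → x ≤ y) := by
    ext x
    simp only [Finset.mem_image, Finset.mem_filter, Finset.mem_univ, true_and]
    constructor
    · rintro ⟨i, hPi, rfl⟩; exact hPi
    · intro hx; exact ⟨τ⁻¹ x, by simpa using hx, by simp⟩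
  rw [← himg, Finset.card_image_of_injective _ τ.injective]
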